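/- Fix n ≥ 1, s ∈ (0,1), R ≥ 1, and set t₀ = R^{3/2}. For all (y,τ) with |y| ≥ R and -R^{3/2} ≤ τ < 0, the kernel ratio satisfies M(-y, -τ)/M(-y, t₀ - τ) ≤ C R^{-1/2} for a constant C depending only on n and s. -/

import Mathlib

open MeasureTheory Real

noncomputable def heatM (n : ℕ) (s c : ℝ) (x : EuclideanSpace ℝ (Fin n)) (t : ℝ) : ℝ :=
  c * t ^ (-((n : ℝ) / 2 + 1 + s)) * Real.exp (-‖x‖ ^ 2 / (4 * t))

lemma aux_bound14 (p r : ℝ) (hp : 0 < p) (hr : 0 ≤ r) :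
    r ^ p * Real.exp (-r / 8) ≤ (8 * p) ^ p * Real.exp (-p) := by
  rcases eq_or_lt_of_le hr with h | h
  · rw [← h, Real.zero_rpow hp.ne', zero_mul]
    positivity
  · have h8p : (0:ℝ) < 8 * p := by linarith
    rw [Real.rpow_def_of_pos h, Real.rpow_def_of_pos h8p, ← Real.exp_add, ← Real.exp_add]
    apply Real.exp_le_exp.mpr
    have hlog : Real.log (r / (8 * p)) ≤ r / (8 * p) - 1 :=
      Real.log_le_sub_one_of_pos (by positivity)
    rw [Real.log_div h.ne' h8p.ne'] at hlog
    have h2 : (Real.log r - Real.log (8 * p)) * p ≤ (r / (8 * p) - 1) * p :=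
      mul_le_mul_of_nonneg_right hlog hp.le
    have h3 : r / (8 * p) * p = r / 8 := by field_simp
    nlinarith

theorem stmt14 (n : ℕ) (hn : 1 ≤ n) (s : ℝ) (hs : s ∈ Set.Ioo (0 : ℝ) 1)
    (cns : ℝ) (hcns : 0 < cns) :
    ∃ C : ℝ, 0 < C ∧
      ∀ (R : ℝ) (y : EuclideanSpace ℝ (Fin n)) (τ : ℝ), 1 ≤ R →
        R ≤ ‖y‖ → -R ^ ((3 : ℝ) / 2) ≤ τ → τ < 0 →
        heatM n s cns (-y) (-τ) / heatM n s cns (-y) (R ^ ((3 : ℝ) / 2) - τ)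
          ≤ C * R ^ (-(1 : ℝ) / 2) := by
  set p : ℝ := (n : ℝ) / 2 + 1 + s with hpdef
  have hs0 := hs.1
  have hp : 0 < p := by positivity
  have hp1 : 1 ≤ p := by
    have : (1:ℝ) ≤ (n:ℝ) := by exact_mod_cast hn
    simp only [hpdef]; linarith
  set K : ℝ := (8 * p) ^ p * Real.exp (-p) with hKdef
  have hK : 0 < K := by positivity
  refine ⟨2 ^ p * K, by positivity, ?_⟩
  intro R y τ h1R hRy hτ1 hτ2
  have hR0 : (0:ℝ) < R := by linarith
  set t₀ : ℝ := R ^ ((3:ℝ)/2) with ht₀def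
  have ht₀ : 0 < t₀ := Real.rpow_pos_of_pos hR0 _
  set T : ℝ := -τ with hTdef
  have hT : 0 < T := by simp only [hTdef]; linarith
  have hTle : T ≤ t₀ := by simp only [hTdef]; linarith
  have hy : 0 < ‖y‖ := lt_of_lt_of_le hR0 hRy
  set N : ℝ := ‖y‖ ^ 2 with hNdef
  have hN : 0 < N := by positivity
  have hNR : R ^ (2:ℝ) ≤ N := by
    rw [hNdef, Real.rpow_two]
    exact pow_le_pow_left₀ hR0.le hRy 2
  have hdef : ∀ t : ℝ, heatM n s cns (-y) t = cns * t ^ (-p) * Real.exp (-N / (4 * t)) := by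
    intro t
    simp [heatM, norm_neg, hpdef, hNdef]
  have hsub : t₀ - τ = t₀ + T := by rw [hTdef]; ring
  rw [hdef, hsub, hdef]
  have hTT : 0 < t₀ + T := by linarith
  have hden : 0 < cns * (t₀ + T) ^ (-p) * Real.exp (-N / (4 * (t₀ + T))) := by positivity
  rw [div_le_iff₀ hden]
  have step1 : Real.exp (-N / (4 * T)) =
      Real.exp (-(N * t₀) / (4 * T * (t₀ + T))) * Real.exp (-N / (4 * (t₀ + T))) := by
    rw [← Real.exp_add]
    congr 1
    field_simp
    ring
  have step2 : Real.exp (-(N * t₀) / (4 * T * (t₀ + T))) ≤ Real.exp (-N / (8 * T)) := by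
    apply Real.exp_le_exp.mpr
    rw [neg_div, neg_div, neg_le_neg_iff]
    rw [div_le_div_iff₀ (by positivity) (by positivity)]
    nlinarith [mul_le_mul_of_nonneg_left hTle (mul_nonneg hN.le hT.le)]
  have step3 : T ^ (-p) * Real.exp (-N / (8 * T)) ≤ N ^ (-p) * K := by
    have heq : T ^ (-p) * Real.exp (-N / (8 * T)) =
        N ^ (-p) * ((N / T) ^ p * Real.exp (-(N / T) / 8)) := by
      rw [show -(N / T) / 8 = -N / (8 * T) by ring]
      rw [Real.div_rpow hN.le hT.le, Real.rpow_neg hN.le, Real.rpow_neg hT.le]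
      have h1 : N ^ p ≠ 0 := (Real.rpow_pos_of_pos hN p).ne'
      field_simp
    rw [heq, hKdef]
    exact mul_le_mul_of_nonneg_left (aux_bound14 p (N / T) hp (by positivity))
      (Real.rpow_nonneg hN.le _)
  have step4 : N ^ (-p) ≤ R ^ (-(1:ℝ)/2) * (2 ^ p * (t₀ + T) ^ (-p)) := by
    have e1 : (2 * t₀) ^ (-p) ≤ (t₀ + T) ^ (-p) :=
      Real.rpow_le_rpow_of_nonpos hTT (by linarith) (by linarith)
    have e2 : (2:ℝ) ^ p * (2 * t₀) ^ (-p) = t₀ ^ (-p) := by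
      rw [Real.mul_rpow (by norm_num) ht₀.le, ← mul_assoc, ← Real.rpow_add (by norm_num)]
      simp
    have e3 : t₀ ^ (-p) = R ^ ((3:ℝ)/2 * (-p)) := by
      rw [ht₀def, ← Real.rpow_mul hR0.le]
    have e4 : N ^ (-p) ≤ R ^ ((2:ℝ) * (-p)) := by
      calc N ^ (-p) ≤ (R ^ (2:ℝ)) ^ (-p) :=
            Real.rpow_le_rpow_of_nonpos (Real.rpow_pos_of_pos hR0 _) hNR (by linarith)
        _ = R ^ ((2:ℝ) * (-p)) := (Real.rpow_mul hR0.le _ _).symm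
    have e5 : R ^ ((2:ℝ) * (-p)) ≤ R ^ (-(1:ℝ)/2 + (3:ℝ)/2 * (-p)) :=
      Real.rpow_le_rpow_of_exponent_le h1R (by clear_value p; linarith)
    calc N ^ (-p) ≤ R ^ (-(1:ℝ)/2 + (3:ℝ)/2 * (-p)) := le_trans e4 e5
      _ = R ^ (-(1:ℝ)/2) * t₀ ^ (-p) := by rw [Real.rpow_add hR0, e3]
      _ = R ^ (-(1:ℝ)/2) * ((2:ℝ) ^ p * (2 * t₀) ^ (-p)) := by rw [e2]
      _ ≤ R ^ (-(1:ℝ)/2) * (2 ^ p * (t₀ + T) ^ (-p)) := by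
          have h2p : (0:ℝ) ≤ (2:ℝ) ^ p := Real.rpow_nonneg (by norm_num) _
          have := mul_le_mul_of_nonneg_left e1 h2p
          exact mul_le_mul_of_nonneg_left this (Real.rpow_nonneg hR0.le _)
  calc cns * T ^ (-p) * Real.exp (-N / (4 * T))
      = cns * (T ^ (-p) * Real.exp (-(N * t₀) / (4 * T * (t₀ + T)))) *
          Real.exp (-N / (4 * (t₀ + T))) := by rw [step1]; ring
    _ ≤ cns * (T ^ (-p) * Real.exp (-N / (8 * T))) * Real.exp (-N / (4 * (t₀ + T))) := by
        have := mul_le_mul_of_nonneg_left step2 (Real.rpow_nonneg hT.le (-p))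
        exact mul_le_mul_of_nonneg_right (mul_le_mul_of_nonneg_left this hcns.le)
          (Real.exp_nonneg _)
    _ ≤ cns * (N ^ (-p) * K) * Real.exp (-N / (4 * (t₀ + T))) :=
        mul_le_mul_of_nonneg_right (mul_le_mul_of_nonneg_left step3 hcns.le)
          (Real.exp_nonneg _)
    _ ≤ cns * (R ^ (-(1:ℝ)/2) * (2 ^ p * (t₀ + T) ^ (-p)) * K) *
          Real.exp (-N / (4 * (t₀ + T))) := by
        have := mul_le_mul_of_nonneg_right step4 hK.le
        exact mul_le_mul_of_nonneg_right (mul_le_mul_of_nonneg_left this hcns.le)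
          (Real.exp_nonneg _)
    _ = 2 ^ p * K * R ^ (-(1:ℝ)/2) *
          (cns * (t₀ + T) ^ (-p) * Real.exp (-N / (4 * (t₀ + T)))) := by ring
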